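/- For a cyclic word w, the measure μ_w defined on cylinders by μ_w(Cyl(u)) = f_w(u) coincides with the uniform discrete probability measure on the finite set A(w), i.e., μ_w = (1/#A(w)) Σ_{x∈A(w)} δ_x. -/

import Mathlib

open Finset
noncomputable section
attribute [local instance] Classical.propDecidable

abbrev Letter (k : ℕ) := Fin k × Bool

def linv {k : ℕ} (x : Letter k) : Letter k := (x.1, !x.2)

/-- `w` is a freely reduced word: no letter is followed by its inverse. -/
def Reduced {k : ℕ} (w : List (Letter k)) : Prop :=
  ∀ i < w.length, w[i + 1]? ≠ (w[i]?).map linv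

/-- `w` is cyclically reduced. -/
def CyclRed {k : ℕ} (w : List (Letter k)) : Prop := Reduced (w ++ w)

/-- `w` and `w'` define the same cyclic word. -/
def CyclEq {k : ℕ} (w w' : List (Letter k)) : Prop := ∃ n, w' = w.rotate n

/-- the word `u` occurs in the cyclic word of `w` starting at position `i` (with wrap-around). -/
def occursAt {k : ℕ} (w u : List (Letter k)) (i : ℕ) : Prop :=
  ∀ j < u.length, w[(i + j) % w.length]? = u[j]?

/-- the number `n_w(u)` of cyclic occurrences of `u` in the cyclic word `w`. -/
def cyclCount {k : ℕ} (w u : List (Letter k)) : ℕ :=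
  ((Finset.range w.length).filter (occursAt w u)).card

/-- the frequency `f_w(u) = n_w(u)/‖w‖`. -/
def freq {k : ℕ} (w u : List (Letter k)) : ℚ := (cyclCount w u : ℚ) / (w.length : ℚ)

/-- the boundary `∂F`: semi-infinite freely reduced words. -/
def Boundary (k : ℕ) := {f : ℕ → Letter k // ∀ n, f (n + 1) ≠ linv (f n)}

instance (k : ℕ) : TopologicalSpace (Boundary k) :=
  inferInstanceAs (TopologicalSpace {f : ℕ → Letter k // ∀ n, f (n + 1) ≠ linv (f n)})

instance (k : ℕ) : MeasurableSpace (Boundary k) := borel _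
instance (k : ℕ) : BorelSpace (Boundary k) := ⟨rfl⟩

/-- the shift map `T`, erasing the first letter. -/
def shiftT {k : ℕ} (ξ : Boundary k) : Boundary k := ⟨fun n => ξ.1 (n + 1), fun n => ξ.2 (n + 1)⟩

/-- the cylinder set of semi-infinite reduced words with prefix `v`. -/
def Cyl {k : ℕ} (v : List (Letter k)) : Set (Boundary k) := {ξ | ∀ i < v.length, v[i]? = some (ξ.1 i)}

/-- `A(w) = {v^∞ : (v) = w}`. -/
def Aset {k : ℕ} (w : List (Letter k)) : Set (Boundary k) :=
  {ξ | ∃ v, CyclEq w v ∧ ∀ n, v[n % v.length]? = some (ξ.1 n)}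

instance (k : ℕ) : T2Space (Boundary k) :=
  inferInstanceAs (T2Space {f : ℕ → Letter k // ∀ n, f (n + 1) ≠ linv (f n)})

lemma key_cyclred {k : ℕ} {w : List (Letter k)} (hw : CyclRed w) (hne : w ≠ []) (m : ℕ) :
    w[(m + 1) % w.length]? ≠ (w[m % w.length]?).map linv := by
  have hL : 0 < w.length := List.length_pos_iff.mpr hne
  have hi : m % w.length < w.length := Nat.mod_lt _ hL
  have h := hw (m % w.length) (by rw [List.length_append]; omega)
  have emod : (m % w.length + 1) % w.length = (m + 1) % w.length := Nat.mod_add_mod m w.length 1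
  have e1 : (w ++ w)[m % w.length]? = w[m % w.length]? := by
    rw [List.getElem?_append]; simp [hi]
  rcases Nat.lt_or_ge (m % w.length + 1) w.length with h2 | h2
  · have e3 : (m + 1) % w.length = m % w.length + 1 := by
      rw [← emod, Nat.mod_eq_of_lt h2]
    have e2 : (w ++ w)[m % w.length + 1]? = w[m % w.length + 1]? := by
      rw [List.getElem?_append]; simp [h2]
    rw [e3]
    rw [e1, e2] at h
    exact h
  · have hEq : m % w.length + 1 = w.length := by omega
    have e3 : (m + 1) % w.length = 0 := by rw [← emod, hEq, Nat.mod_self]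
    have e2 : (w ++ w)[m % w.length + 1]? = w[0]? := by
      rw [hEq, List.getElem?_append]; simp
    rw [e3]
    rw [e1, e2] at h
    exact h

def perio {k : ℕ} (w : List (Letter k)) (hw : CyclRed w) (hne : w ≠ []) (i : ℕ) : Boundary k :=
  ⟨fun n => w[(i + n) % w.length]'(Nat.mod_lt _ (List.length_pos_iff.mpr hne)),
   fun n => by
     have h := key_cyclred hw hne (i + n)
     intro hc
     apply h
     rw [List.getElem?_eq_getElem (Nat.mod_lt _ (List.length_pos_iff.mpr hne)),
         List.getElem?_eq_getElem (Nat.mod_lt _ (List.length_pos_iff.mpr hne)),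
         Option.map_some]
     exact congrArg some hc⟩

lemma perio_shift {k : ℕ} {w : List (Letter k)} {hw : CyclRed w} {hne : w ≠ []} {i j : ℕ}
    (h : perio w hw hne i = perio w hw hne j) (t : ℕ) :
    perio w hw hne (i + t) = perio w hw hne (j + t) := by
  have h' := congrFun (congrArg Subtype.val h)
  apply Subtype.ext
  funext n
  have := h' (t + n)
  simp only [perio] at this ⊢
  have e1 : w[(i + t + n) % w.length]'(Nat.mod_lt _ (List.length_pos_iff.mpr hne)) =
      w[(i + (t + n)) % w.length]'(Nat.mod_lt _ (List.length_pos_iff.mpr hne)) := by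
    congr 1; rw [Nat.add_assoc]
  have e2 : w[(j + t + n) % w.length]'(Nat.mod_lt _ (List.length_pos_iff.mpr hne)) =
      w[(j + (t + n)) % w.length]'(Nat.mod_lt _ (List.length_pos_iff.mpr hne)) := by
    congr 1; rw [Nat.add_assoc]
  rw [e1, e2]
  exact this

lemma perio_mod {k : ℕ} {w : List (Letter k)} (hw : CyclRed w) (hne : w ≠ []) (m : ℕ) :
    perio w hw hne (m % w.length) = perio w hw hne m := by
  apply Subtype.ext
  funext n
  simp only [perio]
  congr 1
  exact Nat.mod_add_mod m w.length n

lemma mem_Aset_iff {k : ℕ} {w : List (Letter k)} (hw : CyclRed w) (hne : w ≠ [])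
    (ξ : Boundary k) : ξ ∈ Aset w ↔ ∃ i, ξ = perio w hw hne i := by
  have hL : 0 < w.length := List.length_pos_iff.mpr hne
  constructor
  · rintro ⟨v, ⟨m, rfl⟩, hx⟩
    refine ⟨m, ?_⟩
    apply Subtype.ext
    funext n
    have hvlen : (w.rotate m).length = w.length := List.length_rotate w m
    have h1 := hx n
    rw [hvlen] at h1
    have hlt : n % w.length < (w.rotate m).length := by rw [hvlen]; exact Nat.mod_lt _ hL
    rw [List.getElem?_eq_getElem hlt] at h1
    have h2 : (w.rotate m)[n % w.length]'hlt
        = w[(n % w.length + m) % w.length]'(Nat.mod_lt _ hL) := by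
      rw [List.getElem_rotate]
    have hidx : (n % w.length + m) % w.length = (m + n) % w.length := by
      rw [Nat.mod_add_mod, Nat.add_comm]
    have := Option.some_injective _ h1
    simp only [perio]
    rw [← this, h2]
    congr 1
  · rintro ⟨i, rfl⟩
    refine ⟨w.rotate i, ⟨i, rfl⟩, fun n => ?_⟩
    have hvlen : (w.rotate i).length = w.length := List.length_rotate w i
    have hlt : n % (w.rotate i).length < (w.rotate i).length := by
      rw [hvlen]; exact Nat.mod_lt _ hL
    rw [List.getElem?_eq_getElem hlt]
    apply congrArg some
    have h2 : (w.rotate i)[n % (w.rotate i).length]'hlt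
        = w[(n % (w.rotate i).length + i) % w.length]'(Nat.mod_lt _ hL) := by
      rw [List.getElem_rotate]
    rw [h2]
    simp only [perio]
    congr 1
    rw [hvlen, Nat.mod_add_mod, Nat.add_comm]

theorem stmt11 (k : ℕ) (hk : 2 ≤ k) (w : List (Letter k)) (hw : CyclRed w) (hwne : w ≠ [])
    (S : Finset (Boundary k)) (hS : (S : Set (Boundary k)) = Aset w) :
    ∀ u : List (Letter k),
      (S.card : ENNReal)⁻¹ * ∑ x ∈ S, MeasureTheory.Measure.dirac x (Cyl u) =
        ENNReal.ofReal ((freq w u : ℚ) : ℝ) := by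
  intro u
  classical
  set L := w.length with hLdef
  have hL : 0 < L := List.length_pos_iff.mpr hwne
  set p : ℕ → Boundary k := perio w hw hwne with hp
  -- S is the image of perio on range L
  have hSimg : S = (range L).image p := by
    apply Finset.coe_injective
    rw [hS, Finset.coe_image, Finset.coe_range]
    ext ξ
    rw [mem_Aset_iff hw hwne]
    constructor
    · rintro ⟨i, rfl⟩
      exact ⟨i % L, Nat.mod_lt _ hL, (perio_mod hw hwne i)⟩
    · rintro ⟨i, _, rfl⟩
      exact ⟨i, rfl⟩
  have perio_mod' : ∀ m, p (m % L) = p m := fun m => perio_mod hw hwne m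
  have perio_shift' : ∀ {i j : ℕ}, p i = p j → ∀ t, p (i + t) = p (j + t) :=
    fun h t => perio_shift h t
  have hp0L : p 0 = p L := by
    have := perio_mod' L
    rwa [Nat.mod_self] at this
  set c : ℕ := ((range L).filter (fun i => p i = p 0)).card with hc
  -- all fibers have card c
  have fiber_card : ∀ j < L, ((range L).filter (fun i => p i = p j)).card = c := by
    intro j hj
    rw [hc]
    apply Finset.card_bij (fun a _ => (a + (L - j)) % L)
    · intro a ha
      rw [Finset.mem_filter] at ha ⊢
      obtain ⟨haL, hap⟩ := ha
      refine ⟨Finset.mem_range.mpr (Nat.mod_lt _ hL), ?_⟩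
      rw [perio_mod']
      have hsh := perio_shift' hap (L - j)
      rw [Nat.add_sub_cancel' hj.le] at hsh
      exact hsh.trans hp0L.symm
    · intro a ha b hb hab
      rw [Finset.mem_filter, Finset.mem_range] at ha hb
      have h1 : (a + (L - j)) % L = (b + (L - j)) % L := hab
      have h2 : a ≡ b [MOD L] := Nat.ModEq.add_right_cancel' (L - j) h1
      calc a = a % L := (Nat.mod_eq_of_lt ha.1).symm
        _ = b % L := h2
        _ = b := Nat.mod_eq_of_lt hb.1
    · intro b hb
      rw [Finset.mem_filter, Finset.mem_range] at hb
      refine ⟨(b + j) % L, ?_, ?_⟩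
      · rw [Finset.mem_filter, Finset.mem_range]
        refine ⟨Nat.mod_lt _ hL, ?_⟩
        rw [perio_mod']
        have hsh := perio_shift' hb.2 j
        rwa [Nat.zero_add] at hsh
      · show ((b + j) % L + (L - j)) % L = b
        rw [Nat.mod_add_mod]
        have : b + j + (L - j) = b + L := by omega
        rw [this, Nat.add_mod_right]
        exact Nat.mod_eq_of_lt hb.1
  -- key summation identity
  have hsum : ∀ F : Boundary k → ℕ, ∑ i ∈ range L, F (p i) = c * ∑ x ∈ S, F x := by
    intro F
    rw [Finset.sum_comp F p, ← hSimg, Finset.mul_sum]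
    refine Finset.sum_congr rfl ?_
    intro b hb
    rw [hSimg] at hb
    obtain ⟨j, hj, rfl⟩ := Finset.mem_image.mp hb
    rw [smul_eq_mul, fiber_card j (Finset.mem_range.mp hj)]
  have h1 : L = c * S.card := by
    have := hsum (fun _ => 1)
    simpa using this
  set Nf : ℕ := (S.filter (fun x => x ∈ Cyl u)).card with hNf
  have occurs_iff : ∀ i, occursAt w u i ↔ p i ∈ Cyl u := by
    intro i
    constructor
    · intro h j hj
      rw [← h j hj, List.getElem?_eq_getElem (Nat.mod_lt _ hL)]
      rfl
    · intro h j hj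
      rw [h j hj, List.getElem?_eq_getElem (Nat.mod_lt _ hL)]
      rfl
  have h2 : cyclCount w u = c * Nf := by
    have e1 : cyclCount w u = ∑ i ∈ range L, (if p i ∈ Cyl u then 1 else 0) := by
      rw [cyclCount]
      rw [Finset.filter_congr (fun i _ => by
        simp only [occurs_iff i] : ∀ i ∈ range L, occursAt w u i ↔ p i ∈ Cyl u)]
      exact Finset.card_filter _ _
    rw [e1, hsum (fun x => if x ∈ Cyl u then 1 else 0), hNf, Finset.card_filter]
  have hScard : S.card ≠ 0 := by
    intro h0
    rw [h0, Nat.mul_zero] at h1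
    omega
  have hcne : c ≠ 0 := by
    intro h0
    rw [h0, Nat.zero_mul] at h1
    omega
  -- compute the dirac sum
  have hdirac : ∑ x ∈ S, MeasureTheory.Measure.dirac x (Cyl u) = (Nf : ENNReal) := by
    rw [hNf, Finset.card_filter, Nat.cast_sum]
    refine Finset.sum_congr rfl ?_
    intro x _
    rw [MeasureTheory.Measure.dirac_apply, Set.indicator_apply]
    by_cases hx : x ∈ Cyl u <;> simp [hx]
  rw [hdirac]
  -- compute the frequency
  have hfreq : freq w u = (Nf : ℚ) / (S.card : ℚ) := by
    rw [freq, ← hLdef, h1, h2]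
    push_cast
    rw [mul_div_mul_left]
    exact_mod_cast hcne
  rw [hfreq]
  have hScpos : (0 : ℝ) < (S.card : ℝ) := by
    exact_mod_cast Nat.pos_of_ne_zero hScard
  rw [show (((Nf : ℚ) / (S.card : ℚ) : ℚ) : ℝ) = (Nf : ℝ) / (S.card : ℝ) by push_cast; ring]
  rw [ENNReal.ofReal_div_of_pos hScpos, ENNReal.ofReal_natCast, ENNReal.ofReal_natCast]
  rw [div_eq_mul_inv, mul_comm]


end
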